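/- Let m, h > 0 and let V : ℝ → ℝ be differentiable. Suppose real numbers q_{j−1}, q_{j−1+ξ}, q_{j−ξ}, q_j and q_j, q_{j+ξ}, q_{j+1−ξ}, q_{j+1} each satisfy the internal equations of the nonlinear Lobatto scheme on their respective intervals. Then the border Euler–Lagrange equation ∂L_d/∂q_r(q_{j−1}, q_{j−1+ξ}, q_{j−ξ}, q_j) + ∂L_d/∂q_ℓ(q_j, q_{j+ξ}, q_{j+1−ξ}, q_{j+1}) = 0 holds if and only if (1/h²)(q_{j−1} − 2q_j + q_{j+1}) + (1/(24m))[(5−√5)V′(q_{j−1+ξ}) + (5+√5)V′(q_{j−ξ}) + 4V′(q_j) + (5+√5)V′(q_{j+ξ}) + (5−√5)V′(q_{j+1−ξ})] = 0. -/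

import Mathlib

/-- The nonlinear discrete Lagrangian with mass `m`, time step `h` and potential `V`. -/
noncomputable def LdNL (m h : ℝ) (V : ℝ → ℝ) (qℓ qξ q1mξ qr : ℝ) : ℝ :=
  (m / (12 * h)) *
    (26 * (qℓ^2 + qr^2) - 2 * qℓ * qr + 50 * (qξ^2 - qξ * q1mξ + q1mξ^2)
      - 25 * (qℓ + qr) * (qξ + q1mξ)
      - 15 * Real.sqrt 5 * (qℓ - qr) * (qξ - q1mξ))
  - (h/12) * (V qℓ + 5 * (V qξ + V q1mξ) + V qr)

/-- Derivative of a quadratic polynomial plus a potential term. -/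
lemma deriv_quad (A B C c x : ℝ) (V : ℝ → ℝ) (hV : DifferentiableAt ℝ V x) :
    deriv (fun y => A * y^2 + B * y + C - c * V y) x
      = 2 * A * x + B - c * deriv V x := by
  have hy2 : HasDerivAt (fun y : ℝ => y^2) (2 * x) x := by
    simpa using hasDerivAt_pow 2 x
  have h1 : HasDerivAt (fun y => A * y^2 + B * y + C - c * V y)
      (2 * A * x + B - c * deriv V x) x := by
    have := (((hy2.const_mul A).add ((hasDerivAt_id x).const_mul B)).add_const C).sub
      (hV.hasDerivAt.const_mul c)
    exact this.congr_deriv (by ring)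
  exact h1.deriv

/-- Under the internal equations of the nonlinear Lobatto scheme on the two adjacent
intervals, the border Euler–Lagrange equation is equivalent to the stated explicit
three-point relation. -/
theorem border_EL_nonlinear_iff (m h : ℝ) (hm : 0 < m) (hh : 0 < h)
    (V : ℝ → ℝ) (hV : Differentiable ℝ V)
    (qjm1 qjm1pξ qjmξ qj qjpξ qjp1mξ qjp1 : ℝ)
    (hint1a : qjm1pξ - (h^2/(30*m)) * (deriv V qjmξ + 2 * deriv V qjm1pξ)
        = ((5 + Real.sqrt 5)/10) * qjm1 + ((5 - Real.sqrt 5)/10) * qj)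
    (hint1b : qjmξ - (h^2/(30*m)) * (2 * deriv V qjmξ + deriv V qjm1pξ)
        = ((5 - Real.sqrt 5)/10) * qjm1 + ((5 + Real.sqrt 5)/10) * qj)
    (hint2a : qjpξ - (h^2/(30*m)) * (deriv V qjp1mξ + 2 * deriv V qjpξ)
        = ((5 + Real.sqrt 5)/10) * qj + ((5 - Real.sqrt 5)/10) * qjp1)
    (hint2b : qjp1mξ - (h^2/(30*m)) * (2 * deriv V qjp1mξ + deriv V qjpξ)
        = ((5 - Real.sqrt 5)/10) * qj + ((5 + Real.sqrt 5)/10) * qjp1) :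
    deriv (fun x => LdNL m h V qjm1 qjm1pξ qjmξ x) qj
        + deriv (fun x => LdNL m h V x qjpξ qjp1mξ qjp1) qj = 0
    ↔ (1/h^2) * (qjm1 - 2 * qj + qjp1)
        + (1/(24*m)) * ((5 - Real.sqrt 5) * deriv V qjm1pξ
          + (5 + Real.sqrt 5) * deriv V qjmξ
          + 4 * deriv V qj
          + (5 + Real.sqrt 5) * deriv V qjpξ
          + (5 - Real.sqrt 5) * deriv V qjp1mξ) = 0 := by
  have hm' := hm.ne'
  have hh' := hh.ne'
  set s := Real.sqrt 5 with hsdef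
  have hs : s ^ 2 = 5 := Real.sq_sqrt (by norm_num)
  field_simp at hint1a hint1b hint2a hint2b
  -- explicit forms of the two partial derivatives
  have eR : (fun x => LdNL m h V qjm1 qjm1pξ qjmξ x)
      = fun x => (m/(12*h)*26) * x^2
          + ((m/(12*h)) * (-2*qjm1 - 25*(qjm1pξ + qjmξ) + 15*s*(qjm1pξ - qjmξ))) * x
          + ((m/(12*h)) * (26*qjm1^2 + 50*(qjm1pξ^2 - qjm1pξ*qjmξ + qjmξ^2)
              - 25*qjm1*(qjm1pξ + qjmξ) - 15*s*qjm1*(qjm1pξ - qjmξ))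
            - (h/12) * (V qjm1 + 5*(V qjm1pξ + V qjmξ)))
          - (h/12) * V x := by
    funext x
    simp only [LdNL, ← hsdef]
    ring
  have eL : (fun x => LdNL m h V x qjpξ qjp1mξ qjp1)
      = fun x => (m/(12*h)*26) * x^2
          + ((m/(12*h)) * (-2*qjp1 - 25*(qjpξ + qjp1mξ) - 15*s*(qjpξ - qjp1mξ))) * x
          + ((m/(12*h)) * (26*qjp1^2 + 50*(qjpξ^2 - qjpξ*qjp1mξ + qjp1mξ^2)
              - 25*qjp1*(qjpξ + qjp1mξ) + 15*s*qjp1*(qjpξ - qjp1mξ))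
            - (h/12) * (5*(V qjpξ + V qjp1mξ) + V qjp1))
          - (h/12) * V x := by
    funext x
    simp only [LdNL, ← hsdef]
    ring
  have dR := eR ▸ deriv_quad _ _ _ _ qj V (hV qj)
  have dL := eL ▸ deriv_quad _ _ _ _ qj V (hV qj)
  rw [dR, dL]
  have key : (2 * (m/(12*h)*26) * qj
        + ((m/(12*h)) * (-2*qjm1 - 25*(qjm1pξ + qjmξ) + 15*s*(qjm1pξ - qjmξ)))
        - (h/12) * deriv V qj)
      + (2 * (m/(12*h)*26) * qj
        + ((m/(12*h)) * (-2*qjp1 - 25*(qjpξ + qjp1mξ) - 15*s*(qjpξ - qjp1mξ)))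
        - (h/12) * deriv V qj)
      = (-(m*h)) * ((1/h^2) * (qjm1 - 2 * qj + qjp1)
        + (1/(24*m)) * ((5 - s) * deriv V qjm1pξ
          + (5 + s) * deriv V qjmξ
          + 4 * deriv V qj
          + (5 + s) * deriv V qjpξ
          + (5 - s) * deriv V qjp1mξ)) := by
    field_simp
    linear_combination ((2/25)*(-25+15*s)) * hint1a
      + ((2/25)*(-25-15*s)) * hint1b
      + ((2/25)*(-25-15*s)) * hint2a
      + ((2/25)*(-25+15*s)) * hint2b
      + (72*m*(qjm1 - 2*qj + qjp1)) * hs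
  rw [key, mul_eq_zero]
  simp [hm', hh']
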